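/- Let M, a be reals with 0 < a < M, and let α, β, c₁, c₂ be real constants. Let R, Φ : (r₊, ∞) → ℝ be differentiable functions with R′(r) = (r²+a²)/Δ and Φ′(r) = a/Δ, and define on U: f₁ = α exp( c₁(t − R(r)) − (a c₁ + c₂/a)(φ − Φ(r)) ), f₂ = β exp( −c₁(t + R(r)) + (a c₁ + c₂/a)(φ + Φ(r)) ), and F₉ = f₁ ( −(a/Δ) dt ∧ dr + dt ∧ dφ − ((r²+a²)/Δ) dr ∧ dφ ) + f₂ ( (a/Δ) dt ∧ dr + dt ∧ dφ + ((r²+a²)/Δ) dr ∧ dφ ). Then on U, the invariant F₉² := g^{μα}g^{νβ}F₉_{αβ}F₉_{μν} equals −8 f₁ f₂ / (Δ sin²θ). -/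

import Mathlib

noncomputable section

/-- Partial derivative of `f` in the coordinate direction `μ`,
coordinates `(x 0, x 1, x 2, x 3) = (t, r, θ, φ)`. -/
def pd (μ : Fin 4) (f : (Fin 4 → ℝ) → ℝ) (x : Fin 4 → ℝ) : ℝ :=
  fderiv ℝ f x (Pi.single μ 1)

/-- ρ² = r² + a² cos²θ. -/
def rho2 (a : ℝ) (x : Fin 4 → ℝ) : ℝ := (x 1) ^ 2 + a ^ 2 * Real.cos (x 2) ^ 2

/-- Δ = r² − 2Mr + a². -/
def Del (M a : ℝ) (x : Fin 4 → ℝ) : ℝ := (x 1) ^ 2 - 2 * M * (x 1) + a ^ 2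

/-- Σ² = (r²+a²)² − Δ a² sin²θ. -/
def Sig2 (M a : ℝ) (x : Fin 4 → ℝ) : ℝ :=
  ((x 1) ^ 2 + a ^ 2) ^ 2 - Del M a x * a ^ 2 * Real.sin (x 2) ^ 2

/-- The Kerr metric in Boyer–Lindquist coordinates `(t, r, θ, φ)`. -/
def kerr (M a : ℝ) (x : Fin 4 → ℝ) : Matrix (Fin 4) (Fin 4) ℝ :=
  Matrix.of fun μ ν =>
    if μ = 0 ∧ ν = 0 then -1 + 2 * M * (x 1) / rho2 a x
    else if (μ = 0 ∧ ν = 3) ∨ (μ = 3 ∧ ν = 0) then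
      -(2 * M * (x 1) * a * Real.sin (x 2) ^ 2) / rho2 a x
    else if μ = 1 ∧ ν = 1 then rho2 a x / Del M a x
    else if μ = 2 ∧ ν = 2 then rho2 a x
    else if μ = 3 ∧ ν = 3 then Sig2 M a x * Real.sin (x 2) ^ 2 / rho2 a x
    else 0

/-- The exterior Kerr domain U = {r > r₊, 0 < θ < π}. -/
def KerrExt (M a : ℝ) : Set (Fin 4 → ℝ) :=
  {x | M + Real.sqrt (M ^ 2 - a ^ 2) < x 1 ∧ 0 < x 2 ∧ x 2 < Real.pi}

/-- `wedge μ ν f` is the antisymmetric matrix of the 2-form `f dx^μ ∧ dx^ν`. -/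
def wedge (μ ν : Fin 4) (f : ℝ) : Matrix (Fin 4) (Fin 4) ℝ :=
  Matrix.of fun i j => if i = μ ∧ j = ν then f else if i = ν ∧ j = μ then -f else 0

/-- The invariant F² = g^{μα} g^{νβ} F_{αβ} F_{μν}. -/
def Fsq (M a : ℝ) (F : (Fin 4 → ℝ) → Matrix (Fin 4) (Fin 4) ℝ) (x : Fin 4 → ℝ) : ℝ :=
  ∑ μ : Fin 4, ∑ ν : Fin 4, ∑ i : Fin 4, ∑ j : Fin 4,
    (kerr M a x)⁻¹ μ i * (kerr M a x)⁻¹ ν j * F x i j * F x μ ν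

/-- f₁ = α exp( c₁(t − R(r)) − (a c₁ + c₂/a)(φ − Φ(r)) ). -/
def f1K (a α c₁ c₂ : ℝ) (R Φ : ℝ → ℝ) (x : Fin 4 → ℝ) : ℝ :=
  α * Real.exp (c₁ * (x 0 - R (x 1)) - (a * c₁ + c₂ / a) * (x 3 - Φ (x 1)))

/-- f₂ = β exp( −c₁(t + R(r)) + (a c₁ + c₂/a)(φ + Φ(r)) ). -/
def f2K (a β c₁ c₂ : ℝ) (R Φ : ℝ → ℝ) (x : Fin 4 → ℝ) : ℝ :=
  β * Real.exp (-c₁ * (x 0 + R (x 1)) + (a * c₁ + c₂ / a) * (x 3 + Φ (x 1)))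

/-- F₉ = f₁(−(a/Δ) dt∧dr + dt∧dφ − ((r²+a²)/Δ) dr∧dφ)
       + f₂((a/Δ) dt∧dr + dt∧dφ + ((r²+a²)/Δ) dr∧dφ). -/
def F9 (M a α β c₁ c₂ : ℝ) (R Φ : ℝ → ℝ) (x : Fin 4 → ℝ) : Matrix (Fin 4) (Fin 4) ℝ :=
  f1K a α c₁ c₂ R Φ x •
      (wedge 0 1 (-(a / Del M a x)) + wedge 0 3 1
        + wedge 1 3 (-(((x 1) ^ 2 + a ^ 2) / Del M a x)))
    + f2K a β c₁ c₂ R Φ x •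
      (wedge 0 1 (a / Del M a x) + wedge 0 3 1
        + wedge 1 3 (((x 1) ^ 2 + a ^ 2) / Del M a x))


def ginv (M a : ℝ) (x : Fin 4 → ℝ) : Matrix (Fin 4) (Fin 4) ℝ :=
  Matrix.of fun μ ν =>
    if μ = 0 ∧ ν = 0 then -(Sig2 M a x) / (rho2 a x * Del M a x)
    else if (μ = 0 ∧ ν = 3) ∨ (μ = 3 ∧ ν = 0) then
      -(2 * M * (x 1) * a) / (rho2 a x * Del M a x)
    else if μ = 1 ∧ ν = 1 then Del M a x / rho2 a x
    else if μ = 2 ∧ ν = 2 then 1 / rho2 a x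
    else if μ = 3 ∧ ν = 3 then
      (Del M a x - a ^ 2 * Real.sin (x 2) ^ 2) / (rho2 a x * Del M a x * Real.sin (x 2) ^ 2)
    else 0

set_option maxHeartbeats 1000000 in
lemma kerr_inv (M a : ℝ) (x : Fin 4 → ℝ) (hΔ : Del M a x ≠ 0) (hρ : rho2 a x ≠ 0)
    (hs : Real.sin (x 2) ≠ 0) : (kerr M a x)⁻¹ = ginv M a x := by
  have hmul : kerr M a x * ginv M a x = 1 := by
    have hsin : Real.sin (x 2) ^ 2 = 1 - Real.cos (x 2) ^ 2 := Real.sin_sq (x 2)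
    have hs2 : Real.sin (x 2) ^ 2 ≠ 0 := pow_ne_zero _ hs
    simp only [Del, rho2] at hΔ hρ
    rw [hsin] at hs2
    have hΔ' : x 1 * (x 1 - 2 * M) + a ^ 2 ≠ 0 := by convert hΔ using 1; ring
    ext i j
    fin_cases i <;> fin_cases j <;>
      simp [kerr, ginv, Matrix.mul_apply, Fin.sum_univ_four, Matrix.one_apply,
        Sig2, Del, rho2] <;>
      (try simp only [hsin]) <;> field_simp <;> ring
  exact Matrix.inv_eq_right_inv hmul

lemma contract (g00 g03 g11 g22 g33 F01 F03 F13 : ℝ)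
    (G Fm : Matrix (Fin 4) (Fin 4) ℝ)
    (hG : G = !![g00,0,0,g03; 0,g11,0,0; 0,0,g22,0; g03,0,0,g33])
    (hF : Fm = !![0,F01,0,F03; -F01,0,0,F13; 0,0,0,0; -F03,-F13,0,0]) :
    ∑ μ : Fin 4, ∑ ν : Fin 4, ∑ i : Fin 4, ∑ j : Fin 4, G μ i * G ν j * Fm i j * Fm μ ν
    = 2 * (g11 * (g00 * F01 - g03 * F13) * F01 + (g00 * g33 - g03 ^ 2) * F03 ^ 2
        + g11 * (g33 * F13 - g03 * F01) * F13) := by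
  subst hG hF
  simp [Fin.sum_univ_four, Matrix.vecHead, Matrix.vecTail]
  ring

lemma final_scalar (D A a s2 p q S P m : ℝ) (hD : D ≠ 0) (hs2 : s2 ≠ 0)
    (hPv : P = A - a ^ 2 * s2) (hSv : S = A ^ 2 - D * a ^ 2 * s2)
    (hmv : m = a * (A - D)) (hP : P ≠ 0) :
    2 * ((D / P) * ((-S / (P * D)) * (-(p * (a / D)) + q * (a / D))
          - (-m / (P * D)) * (-(p * (A / D)) + q * (A / D))) * (-(p * (a / D)) + q * (a / D))
      + ((-S / (P * D)) * ((D - a ^ 2 * s2) / (P * D * s2)) - (-m / (P * D)) ^ 2) * (p + q) ^ 2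
      + (D / P) * (((D - a ^ 2 * s2) / (P * D * s2)) * (-(p * (A / D)) + q * (A / D))
          - (-m / (P * D)) * (-(p * (a / D)) + q * (a / D))) * (-(p * (A / D)) + q * (A / D)))
    = -8 * p * q / (D * s2) := by
  subst hSv hmv
  have hA : A = P + a ^ 2 * s2 := by rw [hPv]; ring
  subst hA
  field_simp
  ring

set_option maxHeartbeats 4000000 in
/-- F₉² = −8 f₁ f₂ / (Δ sin²θ) on U. -/
theorem kerr_F9_invariant (M a α β c₁ c₂ : ℝ) (ha : 0 < a) (haM : a < M)
    (R Φ : ℝ → ℝ)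
    (hR : ∀ r : ℝ, M + Real.sqrt (M ^ 2 - a ^ 2) < r →
      HasDerivAt R ((r ^ 2 + a ^ 2) / (r ^ 2 - 2 * M * r + a ^ 2)) r)
    (hΦ : ∀ r : ℝ, M + Real.sqrt (M ^ 2 - a ^ 2) < r →
      HasDerivAt Φ (a / (r ^ 2 - 2 * M * r + a ^ 2)) r) :
    ∀ x ∈ KerrExt M a,
      Fsq M a (F9 M a α β c₁ c₂ R Φ) x
        = -8 * f1K a α c₁ c₂ R Φ x * f2K a β c₁ c₂ R Φ x /
            (Del M a x * Real.sin (x 2) ^ 2) := by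
  intro x hx
  obtain ⟨hr, hθ0, hθπ⟩ := hx
  have hM : 0 < M := lt_trans ha haM
  have hsq : Real.sqrt (M ^ 2 - a ^ 2) ^ 2 = M ^ 2 - a ^ 2 :=
    Real.sq_sqrt (by nlinarith)
  have hsnn : 0 ≤ Real.sqrt (M ^ 2 - a ^ 2) := Real.sqrt_nonneg _
  have hr0 : 0 < x 1 := by nlinarith
  have hΔ : 0 < Del M a x := by
    have h1 : Real.sqrt (M ^ 2 - a ^ 2) < x 1 - M := by linarith
    have h2 : Real.sqrt (M ^ 2 - a ^ 2) ^ 2 < (x 1 - M) ^ 2 := by nlinarith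
    simp only [Del]; nlinarith
  have hρ : 0 < rho2 a x := by
    simp only [rho2]; nlinarith [sq_nonneg (a * Real.cos (x 2))]
  have hs : 0 < Real.sin (x 2) := Real.sin_pos_of_pos_of_lt_pi hθ0 hθπ
  have hk : (kerr M a x)⁻¹ = ginv M a x := kerr_inv M a x hΔ.ne' hρ.ne' hs.ne'
  have hsin : Real.sin (x 2) ^ 2 = 1 - Real.cos (x 2) ^ 2 := Real.sin_sq (x 2)
  have hs2 : Real.sin (x 2) ^ 2 ≠ 0 := pow_ne_zero _ hs.ne'
  set p := f1K a α c₁ c₂ R Φ x with hp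
  set q := f2K a β c₁ c₂ R Φ x with hq
  have hGmat : ginv M a x =
      !![-(Sig2 M a x) / (rho2 a x * Del M a x), 0, 0,
          -(2 * M * (x 1) * a) / (rho2 a x * Del M a x);
        0, Del M a x / rho2 a x, 0, 0;
        0, 0, 1 / rho2 a x, 0;
        -(2 * M * (x 1) * a) / (rho2 a x * Del M a x), 0, 0,
          (Del M a x - a ^ 2 * Real.sin (x 2) ^ 2) /
            (rho2 a x * Del M a x * Real.sin (x 2) ^ 2)] := by
    ext i j; fin_cases i <;> fin_cases j <;> simp [ginv, Matrix.vecHead, Matrix.vecTail]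
  have hFmat : F9 M a α β c₁ c₂ R Φ x =
      !![0, -(p * (a / Del M a x)) + q * (a / Del M a x), 0, p + q;
        -(-(p * (a / Del M a x)) + q * (a / Del M a x)), 0, 0,
          -(p * (((x 1) ^ 2 + a ^ 2) / Del M a x))
            + q * (((x 1) ^ 2 + a ^ 2) / Del M a x);
        0, 0, 0, 0;
        -(p + q), -(-(p * (((x 1) ^ 2 + a ^ 2) / Del M a x))
            + q * (((x 1) ^ 2 + a ^ 2) / Del M a x)), 0, 0] := by
    ext i j; fin_cases i <;> fin_cases j <;>
      simp [F9, wedge, Matrix.vecHead, Matrix.vecTail, ← hp, ← hq] <;> (try ring)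
  have e1 : rho2 a x = ((x 1) ^ 2 + a ^ 2) - a ^ 2 * Real.sin (x 2) ^ 2 := by
    simp only [rho2]; rw [hsin]; ring
  have e3 : 2 * M * (x 1) * a = a * (((x 1) ^ 2 + a ^ 2) - Del M a x) := by
    simp only [Del]; ring
  rw [Fsq, hk]
  rw [contract _ _ _ _ _ _ _ _ _ _ hGmat hFmat]
  exact final_scalar (Del M a x) ((x 1) ^ 2 + a ^ 2) a (Real.sin (x 2) ^ 2) p q
    (Sig2 M a x) (rho2 a x) (2 * M * (x 1) * a) hΔ.ne' hs2 e1 rfl e3 hρ.ne'
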